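/- There is an absolute constant C > 0 such that the following holds. Let d ≥ 2 be an integer, let G be a finite simple graph admitting a coin model (c, r), and let ⪯ be a Koebe ordering of G with respect to (c, r). Then for every vertex u of G, adm_d(u) ≤ C·d/ln(d). -/

import Mathlib

open Metric

/-- A coin model of a simple graph `G`: centers `c` and positive radii `r` such that the
open disks are pairwise disjoint and closed disks of adjacent vertices intersect. -/
structure IsCoinModel {V : Type*} (G : SimpleGraph V)
    (c : V → EuclideanSpace ℝ (Fin 2)) (r : V → ℝ) : Prop where
  r_pos : ∀ v, 0 < r v
  disj : ∀ u v, u ≠ v → Disjoint (ball (c u) (r u)) (ball (c v) (r v))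
  touch : ∀ u v, G.Adj u v →
    (closedBall (c u) (r u) ∩ closedBall (c v) (r v)).Nonempty

open MeasureTheory SimpleGraph


/-- Area bound: pairwise disjoint balls inside a big ball. -/
lemma sum_sq_le_of_disjoint_balls {ι : Type*} (s : Finset ι)
    (x : ι → EuclideanSpace ℝ (Fin 2)) (ρ : ι → ℝ) (hρ : ∀ i ∈ s, 0 ≤ ρ i)
    (x₀ : EuclideanSpace ℝ (Fin 2)) (R : ℝ) (hR : 0 ≤ R)
    (hd : ∀ i ∈ s, ∀ j ∈ s, i ≠ j → Disjoint (ball (x i) (ρ i)) (ball (x j) (ρ j)))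
    (hsub : ∀ i ∈ s, ball (x i) (ρ i) ⊆ ball x₀ R) :
    ∑ i ∈ s, ρ i ^ 2 ≤ R ^ 2 := by
  set K : ENNReal := ENNReal.ofReal (Real.sqrt Real.pi ^ 2 / Real.Gamma ((2:ℕ) / 2 + 1)) with hK
  have hK0 : K ≠ 0 := by
    rw [hK]
    simp only [ne_eq, ENNReal.ofReal_eq_zero, not_le]
    apply div_pos (by positivity : (0:ℝ) < Real.sqrt Real.pi ^ 2)
    apply Real.Gamma_pos_of_pos
    norm_num
  have hKtop : K ≠ ⊤ := ENNReal.ofReal_ne_top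
  have hvol : ∀ (y : EuclideanSpace ℝ (Fin 2)) (t : ℝ),
      volume (ball y t) = ENNReal.ofReal t ^ 2 * K := by
    intro y t
    rw [EuclideanSpace.volume_ball, Fintype.card_fin, hK]
  have h1 : (∑ i ∈ s, ENNReal.ofReal (ρ i) ^ 2) * K ≤ ENNReal.ofReal R ^ 2 * K := by
    calc (∑ i ∈ s, ENNReal.ofReal (ρ i) ^ 2) * K
        = ∑ i ∈ s, volume (ball (x i) (ρ i)) := by
          rw [Finset.sum_mul]
          exact Finset.sum_congr rfl fun i _ => (hvol _ _).symm
      _ = volume (⋃ i ∈ s, ball (x i) (ρ i)) := by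
          rw [measure_biUnion_finset (fun i hi j hj hij => hd i hi j hj hij)
            (fun i _ => measurableSet_ball)]
      _ ≤ volume (ball x₀ R) := measure_mono (Set.iUnion₂_subset hsub)
      _ = ENNReal.ofReal R ^ 2 * K := hvol _ _
  rw [ENNReal.mul_le_mul_iff_left hK0 hKtop] at h1
  have h2 : ENNReal.ofReal (∑ i ∈ s, ρ i ^ 2) ≤ ENNReal.ofReal (R ^ 2) := by
    rw [ENNReal.ofReal_sum_of_nonneg (fun i hi => by positivity)]
    calc ∑ i ∈ s, ENNReal.ofReal (ρ i ^ 2)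
        = ∑ i ∈ s, ENNReal.ofReal (ρ i) ^ 2 := by
          refine Finset.sum_congr rfl fun i hi => ?_
          rw [ENNReal.ofReal_pow (hρ i hi)]
      _ ≤ ENNReal.ofReal R ^ 2 := h1
      _ = ENNReal.ofReal (R ^ 2) := by rw [ENNReal.ofReal_pow hR]
  exact (ENNReal.ofReal_le_ofReal_iff (by positivity)).mp h2


/-- Crossing lemma: a chain with step sizes bounded by consecutive weights, starting below `a`
and reaching `b`, accumulates weight at least `(b-a)/2 - 2` strictly inside `[a,b)`. -/
lemma crossing_lemma (f g : ℕ → ℝ) (M : ℕ) (a b : ℝ) (hab : a < b)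
    (hg0 : ∀ t, 0 ≤ g t) (hg1 : ∀ t, t ≤ M → g t ≤ 1)
    (hstep : ∀ t, t < M → |f (t + 1) - f t| ≤ g t + g (t + 1))
    (hf0 : f 0 ≤ a) (hT : ∃ T, T ≤ M ∧ b ≤ f T) :
    (b - a) / 2 - 2 ≤
      ∑ t ∈ (Finset.range (M + 1)).filter (fun t => a ≤ f t ∧ f t < b), g t := by
  classical
  -- least index reaching b
  have hex : ∃ T, T ≤ M ∧ b ≤ f T := hT
  set t1 := Nat.find hex with ht1def
  obtain ⟨ht1M, ht1b⟩ := Nat.find_spec hex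
  have ht1min : ∀ t, t < t1 → ¬(t ≤ M ∧ b ≤ f t) := fun t ht => Nat.find_min hex ht
  have ht1pos : 0 < t1 := by
    rcases Nat.eq_zero_or_pos t1 with h | h
    · exfalso
      have : f t1 = f 0 := by rw [h]
      rw [this] at ht1b
      linarith
    · exact h
  -- greatest index ≤ t1 with f ≤ a
  set t0 := Nat.findGreatest (fun t => f t ≤ a) t1 with ht0def
  have ht0a : f t0 ≤ a := Nat.findGreatest_spec (P := fun t => f t ≤ a) (Nat.zero_le t1) hf0
  have ht0le : t0 ≤ t1 := Nat.findGreatest_le t1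
  have ht0max : ∀ t, t0 < t → t ≤ t1 → a < f t := by
    intro t h1 h2
    by_contra h
    exact Nat.findGreatest_is_greatest h1 h2 (le_of_not_gt h)
  have ht0lt : t0 < t1 := by
    rcases lt_or_eq_of_le ht0le with h | h
    · exact h
    · exfalso; rw [h] at ht0a; linarith
  -- interior indices are in the filter set
  have hfb : ∀ t, t < t1 → t ≤ M → f t < b := by
    intro t ht htM
    by_contra h
    exact ht1min t ht ⟨htM, le_of_not_gt h⟩
  -- telescoping
  have htel : f t1 - f t0 ≤ ∑ i ∈ Finset.range (t1 - t0), (g (t0 + i) + g (t0 + i + 1)) := by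
    have key := Finset.sum_range_sub (fun i => f (t0 + i)) (t1 - t0)
    simp only [Nat.add_zero] at key
    rw [show t0 + (t1 - t0) = t1 by omega] at key
    have : f t1 - f t0 = ∑ i ∈ Finset.range (t1 - t0), (f (t0 + i + 1) - f (t0 + i)) :=
      key.symm
    rw [this]
    apply Finset.sum_le_sum
    intro i hi
    simp only [Finset.mem_range] at hi
    have h1 : t0 + i < M := by omega
    calc f (t0 + i + 1) - f (t0 + i) ≤ |f (t0 + i + 1) - f (t0 + i)| := le_abs_self _
      _ ≤ g (t0 + i) + g (t0 + i + 1) := hstep _ h1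
  -- sum of step bounds ≤ 2 * sum over Icc t0 t1
  have hsum2 : ∑ i ∈ Finset.range (t1 - t0), (g (t0 + i) + g (t0 + i + 1))
      ≤ 2 * ∑ t ∈ Finset.Icc t0 t1, g t := by
    rw [Finset.sum_add_distrib, two_mul]
    gcongr
    · calc ∑ i ∈ Finset.range (t1 - t0), g (t0 + i)
          = ∑ t ∈ Finset.Ico t0 t1, g t := by
            rw [Finset.sum_Ico_eq_sum_range]
      _ ≤ ∑ t ∈ Finset.Icc t0 t1, g t := by
          apply Finset.sum_le_sum_of_subset_of_nonneg
          · intro t ht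
            simp only [Finset.mem_Ico] at ht
            simp only [Finset.mem_Icc]
            omega
          · exact fun t _ _ => hg0 t
    · calc ∑ i ∈ Finset.range (t1 - t0), g (t0 + i + 1)
          = ∑ t ∈ Finset.Ico (t0 + 1) (t1 + 1), g t := by
            rw [Finset.sum_Ico_eq_sum_range]
            have h : t1 + 1 - (t0 + 1) = t1 - t0 := by omega
            rw [h]
            apply Finset.sum_congr rfl
            intro i _
            congr 1
            omega
      _ ≤ ∑ t ∈ Finset.Icc t0 t1, g t := by
          apply Finset.sum_le_sum_of_subset_of_nonneg
          · intro t ht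
            simp only [Finset.mem_Ico] at ht
            simp only [Finset.mem_Icc]
            omega
          · exact fun t _ _ => hg0 t
  -- Icc sum ≤ 2 + Ioo sum
  have hsum3 : ∑ t ∈ Finset.Icc t0 t1, g t ≤ 2 + ∑ t ∈ Finset.Ioo t0 t1, g t := by
    have hsub : Finset.Ioo t0 t1 ⊆ Finset.Icc t0 t1 := Finset.Ioo_subset_Icc_self
    rw [← Finset.sum_sdiff hsub]
    have hcard : (Finset.Icc t0 t1 \ Finset.Ioo t0 t1).card ≤ 2 := by
      have h1 : Finset.Icc t0 t1 \ Finset.Ioo t0 t1 ⊆ {t0, t1} := by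
        intro t ht
        simp only [Finset.mem_sdiff, Finset.mem_Icc, Finset.mem_Ioo] at ht
        simp only [Finset.mem_insert, Finset.mem_singleton]
        omega
      calc (Finset.Icc t0 t1 \ Finset.Ioo t0 t1).card ≤ ({t0, t1} : Finset ℕ).card :=
            Finset.card_le_card h1
        _ ≤ 2 := Finset.card_insert_le _ _ |>.trans (by simp)
    have : ∑ t ∈ Finset.Icc t0 t1 \ Finset.Ioo t0 t1, g t ≤ 2 := by
      calc ∑ t ∈ Finset.Icc t0 t1 \ Finset.Ioo t0 t1, g t
          ≤ ∑ _t ∈ Finset.Icc t0 t1 \ Finset.Ioo t0 t1, (1 : ℝ) := by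
            apply Finset.sum_le_sum
            intro t ht
            simp only [Finset.mem_sdiff, Finset.mem_Icc] at ht
            exact hg1 t (by omega)
        _ = (Finset.Icc t0 t1 \ Finset.Ioo t0 t1).card := by simp
        _ ≤ 2 := by exact_mod_cast hcard
    linarith
  -- Ioo sum ≤ filter sum
  have hsum4 : ∑ t ∈ Finset.Ioo t0 t1, g t ≤
      ∑ t ∈ (Finset.range (M + 1)).filter (fun t => a ≤ f t ∧ f t < b), g t := by
    apply Finset.sum_le_sum_of_subset_of_nonneg
    · intro t ht
      simp only [Finset.mem_Ioo] at ht
      simp only [Finset.mem_filter, Finset.mem_range]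
      refine ⟨by omega, le_of_lt (ht0max t ht.1 (le_of_lt ht.2)), hfb t ht.2 (by omega)⟩
    · exact fun t _ _ => hg0 t
  have hba : b - a ≤ f t1 - f t0 := by linarith
  linarith


lemma getVert_mem_support' {V : Type*} {G : SimpleGraph V} {u v : V} (p : G.Walk u v)
    (n : ℕ) (hn : n ≤ p.length) : p.getVert n ∈ p.support :=
  Walk.mem_support_iff_exists_getVert.mpr ⟨n, rfl, hn⟩

lemma getVert_injOn' {V : Type*} {G : SimpleGraph V} {u v : V} {p : G.Walk u v}
    (hp : p.IsPath) : ∀ m ≤ p.length, ∀ n ≤ p.length, p.getVert m = p.getVert n → m = n := by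
  induction p with
  | nil => intro m hm n hn _; simp only [Walk.length_nil, Nat.le_zero] at hm hn; omega
  | @cons a b c hadj q ih =>
    intro m hm n hn h
    rw [Walk.length_cons] at hm hn
    rw [Walk.cons_isPath_iff] at hp
    match m, n with
    | 0, 0 => rfl
    | 0, (n+1) =>
      exfalso
      apply hp.2
      rw [Walk.getVert_zero, Walk.getVert_cons_succ] at h
      rw [h]
      exact getVert_mem_support' q n (by omega)
    | (m+1), 0 =>
      exfalso
      apply hp.2
      rw [Walk.getVert_zero, Walk.getVert_cons_succ] at h
      rw [← h]
      exact getVert_mem_support' q m (by omega)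
    | (m+1), (n+1) =>
      rw [Walk.getVert_cons_succ, Walk.getVert_cons_succ] at h
      have := ih hp.1 m (by omega) n (by omega) h
      omega

/-- Inside a closed ball of radius `ρ ≥ 1`, near any point of it there is a unit subball. -/
lemma exists_unit_subball {E : Type*} [NormedAddCommGroup E] [NormedSpace ℝ E]
    {pt cc : E} {ρ : ℝ} (h1 : 1 ≤ ρ) (hp : pt ∈ closedBall cc ρ) :
    ∃ q : E, ball q 1 ⊆ ball cc ρ ∧ dist pt q ≤ 1 := by
  refine ⟨pt + ρ⁻¹ • (cc - pt), ?_, ?_⟩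
  · intro y hy
    rw [Metric.mem_ball] at hy ⊢
    have hρ0 : 0 < ρ := lt_of_lt_of_le one_pos h1
    have hqc : dist (pt + ρ⁻¹ • (cc - pt)) cc = (1 - ρ⁻¹) * dist pt cc := by
      rw [dist_eq_norm, dist_eq_norm]
      have : pt + ρ⁻¹ • (cc - pt) - cc = (1 - ρ⁻¹) • (pt - cc) := by
        module
      rw [this, norm_smul, Real.norm_eq_abs, abs_of_nonneg]
      have : ρ⁻¹ ≤ 1 := by
        rw [inv_le_one_iff₀]; right; exact h1
      linarith
    calc dist y cc ≤ dist y (pt + ρ⁻¹ • (cc - pt)) + dist (pt + ρ⁻¹ • (cc - pt)) cc :=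
          dist_triangle _ _ _
      _ < 1 + (1 - ρ⁻¹) * dist pt cc := by linarith [hy]
      _ ≤ 1 + (1 - ρ⁻¹) * ρ := by
          have h2 : 0 ≤ 1 - ρ⁻¹ := by
            have : ρ⁻¹ ≤ 1 := by rw [inv_le_one_iff₀]; right; exact h1
            linarith
          have := mem_closedBall.mp hp
          nlinarith
      _ = ρ := by
          field_simp
          ring
  · rw [dist_eq_norm]
    have : pt - (pt + ρ⁻¹ • (cc - pt)) = (-ρ⁻¹) • (cc - pt) := by
      rw [neg_smul]; abel
    rw [this, norm_smul, Real.norm_eq_abs, abs_neg, abs_of_nonneg (by positivity)]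
    have h3 : ‖cc - pt‖ ≤ ρ := by
      rw [← dist_eq_norm, _root_.dist_comm]
      exact mem_closedBall.mp hp
    have hρ0 : 0 < ρ := lt_of_lt_of_le one_pos h1
    calc ρ⁻¹ * ‖cc - pt‖ ≤ ρ⁻¹ * ρ := by
          apply mul_le_mul_of_nonneg_left h3 (by positivity)
      _ = 1 := by field_simp

set_option maxHeartbeats 1600000 in
lemma key_lemma (d : ℕ) (hd : 2 ≤ d) (V : Type) [Fintype V] [LinearOrder V]
    (G : SimpleGraph V) (c : V → EuclideanSpace ℝ (Fin 2)) (r : V → ℝ)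
    (hmodel : IsCoinModel G c r) (hkoebe : ∀ a b : V, r b < r a → a ≤ b)
    (u : V) (hru : r u = 1) (k : ℕ) (w : Fin k → V) (p : ∀ i, G.Walk u (w i))
    (hpath : ∀ i, (p i).IsPath) (hlen : ∀ i, 1 ≤ (p i).length ∧ (p i).length ≤ d)
    (hw : ∀ i, w i ≤ u) (hint : ∀ i, ∀ x ∈ (p i).support, x ≠ u → x ≠ w i → u < x)
    (hdis : ∀ i j, i ≠ j → ∀ x, x ∈ (p i).support → x ∈ (p j).support → x = u) :
    (k : ℝ) ≤ 1500 * d / Real.log d := by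
  classical
  have hd1 : (1:ℝ) < d := by exact_mod_cast hd
  have hlog : (0:ℝ) < Real.log d := Real.log_pos hd1
  obtain ⟨J, hJdef⟩ : ∃ J : ℕ, J = Nat.log 2 d / 4 + 1 := ⟨_, rfl⟩
  have hJ1 : 1 ≤ J := by omega
  set D : ℝ := 2 ^ (J + 3) with hDdef
  have hD16 : (16:ℝ) ≤ D := by
    rw [hDdef]
    calc (16:ℝ) = 2 ^ 4 := by norm_num
      _ ≤ 2 ^ (J + 3) := by
        apply pow_le_pow_right₀ one_le_two
        omega
  have hDpos : (0:ℝ) < D := by linarith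
  -- basic radius facts
  have hr1 : ∀ (i : Fin k), ∀ x ∈ (p i).support, x ≠ w i → r x ≤ 1 := by
    intro i x hx hxw
    by_cases hxu : x = u
    · rw [hxu, hru]
    · have hux : u < x := hint i x hx hxu hxw
      by_contra h
      push_neg at h
      rw [← hru] at h
      exact absurd (hkoebe x u h) (not_le.mpr hux)
  have hwne : ∀ i, w i ≠ u := by
    intro i h
    have h0 : (p i).getVert 0 = u := Walk.getVert_zero _
    have hL : (p i).getVert (p i).length = w i := Walk.getVert_length _
    have := getVert_injOn' (hpath i) 0 (by omega) (p i).length le_rfl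
      (by rw [h0, hL, h])
    have := (hlen i).1
    omega
  have hwr : ∀ i, 1 ≤ r (w i) := by
    intro i
    by_contra h
    push_neg at h
    rw [← hru] at h
    have h2 := hkoebe u (w i) h
    exact hwne i (le_antisymm (hw i) h2)
  have hwinj : ∀ i j : Fin k, i ≠ j → w i ≠ w j := by
    intro i j hij h
    apply hwne i
    apply hdis i j hij
    · exact Walk.end_mem_support _
    · rw [h]; exact Walk.end_mem_support _
  have hadj_dist : ∀ a b : V, G.Adj a b → dist (c a) (c b) ≤ r a + r b := by
    intro a b hab
    obtain ⟨q, hq1, hq2⟩ := hmodel.touch a b hab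
    rw [mem_closedBall] at hq1 hq2
    calc dist (c a) (c b) ≤ dist (c a) q + dist q (c b) := dist_triangle _ _ _
      _ ≤ r a + r b := by
        have h1 : dist (c a) q ≤ r a := by rw [_root_.dist_comm]; exact hq1
        exact add_le_add h1 hq2
  -- far/near split
  set far : Fin k → Prop :=
    fun i => ∃ x ∈ (p i).support, x ≠ w i ∧ D ≤ dist (c x) (c u) with hfardef
  set F : Finset (Fin k) := Finset.univ.filter far with hFdef
  set N : Finset (Fin k) := Finset.univ.filter (fun i => ¬ far i) with hNdef
  have hsplit : F.card + N.card = k := by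
    rw [hFdef, hNdef, Finset.card_filter_add_card_filter_not, Finset.card_univ,
      Fintype.card_fin]
  -- NEAR BOUND
  have hnear : (N.card : ℝ) ≤ (D + 3) ^ 2 := by
    have hz : ∀ i : Fin k, ∃ z : EuclideanSpace ℝ (Fin 2), ¬ far i →
        (ball z 1 ⊆ ball (c (w i)) (r (w i)) ∧ ball z 1 ⊆ ball (c u) (D + 3)) := by
      intro i
      by_cases hfi : far i
      · exact ⟨c u, fun h => absurd hfi h⟩
      · set L := (p i).length with hL
        have hL1 : 1 ≤ L := (hlen i).1
        have hadjlast : G.Adj ((p i).getVert (L - 1)) (w i) := by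
          have h1 := (p i).adj_getVert_succ (i := L - 1) (by omega)
          rwa [show L - 1 + 1 = L by omega, Walk.getVert_length] at h1
        obtain ⟨q, hq1, hq2⟩ := hmodel.touch _ _ hadjlast
        have hprev_ne : (p i).getVert (L - 1) ≠ w i := by
          intro h
          have hLL : (p i).getVert L = w i := Walk.getVert_length _
          have := getVert_injOn' (hpath i) (L - 1) (by omega) L le_rfl
            (by rw [h, hLL])
          omega
        have hprev_mem : (p i).getVert (L - 1) ∈ (p i).support :=
          getVert_mem_support' _ _ (by omega)
        have hprev_r : r ((p i).getVert (L - 1)) ≤ 1 := hr1 i _ hprev_mem hprev_ne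
        have hprev_d : dist (c ((p i).getVert (L - 1))) (c u) < D := by
          by_contra h
          exact hfi ⟨_, hprev_mem, hprev_ne, le_of_not_gt h⟩
        have hq_d : dist q (c u) ≤ D + 1 := by
          rw [mem_closedBall] at hq1
          calc dist q (c u) ≤ dist q (c ((p i).getVert (L - 1)))
                + dist (c ((p i).getVert (L - 1))) (c u) := dist_triangle _ _ _
            _ ≤ 1 + D := by
              have := hq1.trans hprev_r
              linarith
            _ = D + 1 := by ring
        obtain ⟨z, hz1, hz2⟩ := exists_unit_subball (hwr i) hq2
        refine ⟨z, fun _ => ⟨hz1, ?_⟩⟩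
        intro y hy
        rw [Metric.mem_ball] at hy ⊢
        calc dist y (c u) ≤ dist y z + dist z q + dist q (c u) := dist_triangle4 _ _ _ _
          _ < 1 + 1 + (D + 1) := by
            have h2 : dist z q ≤ 1 := by rw [_root_.dist_comm]; exact hz2
            linarith
          _ = D + 3 := by ring
    choose z hz using hz
    have harea := sum_sq_le_of_disjoint_balls N z (fun _ => 1) (fun _ _ => zero_le_one)
      (c u) (D + 3) (by linarith) ?_ ?_
    · simpa using harea
    · intro i hi j hj hij
      rw [hNdef, Finset.mem_filter] at hi hj
      have h1 := (hz i hi.2).1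
      have h2 := (hz j hj.2).1
      exact Set.disjoint_of_subset h1 h2 (hmodel.disj (w i) (w j) (hwinj i j hij))
    · intro i hi
      rw [hNdef, Finset.mem_filter] at hi
      exact (hz i hi.2).2
  -- FAR BOUND
  have hfarb : (F.card : ℝ) ≤ 256 * d / J := by
    obtain ⟨S, hmemS⟩ : ∃ S : Fin k → ℕ → Finset V, ∀ i j x, (x ∈ S i j ↔
        (x ∈ (p i).support ∧ x ≠ w i ∧
        (2:ℝ)^j ≤ dist (c x) (c u) ∧ dist (c x) (c u) < 2^(j+1))) :=
      ⟨fun i j => Finset.univ.filter (fun x => x ∈ (p i).support ∧ x ≠ w i ∧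
          (2:ℝ)^j ≤ dist (c x) (c u) ∧ dist (c x) (c u) < 2^(j+1)),
        fun i j x => by simp only [Finset.mem_filter, Finset.mem_univ, true_and]⟩
    -- CLAIM 1 : crossing
    have claim1 : ∀ i ∈ F, ∀ j : ℕ, 3 ≤ j → j ≤ J + 2 →
        (2:ℝ)^j / 4 ≤ ∑ x ∈ S i j, r x := by
      intro i hiF j hj3 hjJ
      rw [hFdef, Finset.mem_filter] at hiF
      obtain ⟨-, xx, hxmem, hxw, hxD⟩ := hiF
      set L := (p i).length with hLdef
      have hL1 : 1 ≤ L := (hlen i).1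
      set M := L - 1 with hMdef
      set f : ℕ → ℝ := fun t => dist (c ((p i).getVert t)) (c u) with hfdef
      set g : ℕ → ℝ := fun t => r ((p i).getVert t) with hgdef
      obtain ⟨T, hTx, hTle⟩ := Walk.mem_support_iff_exists_getVert.mp hxmem
      have hTM : T ≤ M := by
        have : T ≠ L := by
          intro h
          rw [h] at hTx
          rw [Walk.getVert_length] at hTx
          exact hxw hTx.symm
        omega
      have hgv_ne : ∀ t, t ≤ M → (p i).getVert t ≠ w i := by
        intro t ht h
        have hLL : (p i).getVert L = w i := Walk.getVert_length _
        have := getVert_injOn' (hpath i) t (by omega) L le_rfl (by rw [h, hLL])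
        omega
      have hcross := crossing_lemma f g M ((2:ℝ)^j) ((2:ℝ)^(j+1)) ?_ ?_ ?_ ?_ ?_ ?_
      rotate_left
      · have h0 : (0:ℝ) < 2^j := by positivity
        rw [pow_succ]
        linarith
      · intro t
        exact (hmodel.r_pos _).le
      · intro t ht
        exact hr1 i _ (getVert_mem_support' _ _ (by omega)) (hgv_ne t ht)
      · intro t ht
        have hadj := (p i).adj_getVert_succ (i := t) (by omega)
        have hdd := hadj_dist _ _ hadj
        have h1 : |f (t+1) - f t| ≤ dist (c ((p i).getVert (t+1))) (c ((p i).getVert t)) := by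
          rw [hfdef]
          exact abs_dist_sub_le _ _ _
        rw [_root_.dist_comm] at h1
        calc |f (t+1) - f t| ≤ dist (c ((p i).getVert t)) (c ((p i).getVert (t+1))) := h1
          _ ≤ r ((p i).getVert t) + r ((p i).getVert (t+1)) := hdd
          _ = g t + g (t+1) := rfl
      · show dist (c ((p i).getVert 0)) (c u) ≤ 2^j
        rw [Walk.getVert_zero, _root_.dist_self]
        positivity
      · refine ⟨T, hTM, ?_⟩
        have h1 : (2:ℝ)^(j+1) ≤ D := by
          rw [hDdef]
          apply pow_le_pow_right₀ one_le_two
          omega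
        have h2 : f T = dist (c xx) (c u) := by rw [hfdef]; simp [hTx]
        rw [h2]
        exact h1.trans hxD
      -- transfer index sum to vertex sum
      set TT := (Finset.range (M+1)).filter (fun t => (2:ℝ)^j ≤ f t ∧ f t < 2^(j+1))
        with hTTdef
      have hTTle : ∀ t ∈ TT, t ≤ M := by
        intro t ht
        rw [hTTdef, Finset.mem_filter, Finset.mem_range] at ht
        omega
      have hinj : ∀ a ∈ TT, ∀ b ∈ TT, (p i).getVert a = (p i).getVert b → a = b := by
        intro a ha b hb h
        exact getVert_injOn' (hpath i) a (by have := hTTle a ha; omega)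
          b (by have := hTTle b hb; omega) h
      have himg : TT.image (p i).getVert ⊆ S i j := by
        intro x hx
        rw [Finset.mem_image] at hx
        obtain ⟨t, ht, rfl⟩ := hx
        have htM := hTTle t ht
        rw [hTTdef, Finset.mem_filter] at ht
        rw [hmemS]
        exact ⟨getVert_mem_support' _ _ (by omega), hgv_ne t htM, ht.2.1, ht.2.2⟩
      have h8 : (8:ℝ) ≤ 2^j := by
        calc (8:ℝ) = 2^3 := by norm_num
          _ ≤ 2^j := pow_le_pow_right₀ one_le_two hj3
      calc (2:ℝ)^j / 4 ≤ ((2:ℝ)^(j+1) - 2^j) / 2 - 2 := by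
            rw [pow_succ]
            linarith
        _ ≤ ∑ t ∈ TT, g t := hcross
        _ = ∑ x ∈ TT.image (p i).getVert, r x := by
            rw [Finset.sum_image hinj]
        _ ≤ ∑ x ∈ S i j, r x := Finset.sum_le_sum_of_subset_of_nonneg himg
            (fun x _ _ => (hmodel.r_pos x).le)
    -- CLAIM 2 : area per scale
    have claim2 : ∀ j : ℕ, ∑ i ∈ F, ∑ x ∈ S i j, r x ^ 2 ≤ ((2:ℝ)^(j+2))^2 := by
      intro j
      have h2pos : (0:ℝ) < 2^j := by positivity
      have hSdisj : (F : Set (Fin k)).PairwiseDisjoint (fun i => S i j) := by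
        intro i _ i' _ hii'
        rw [Function.onFun, Finset.disjoint_left]
        intro x hx hx'
        rw [hmemS] at hx hx'
        have hxu : x = u := hdis i i' hii' x hx.1 hx'.1
        have : dist (c x) (c u) = 0 := by rw [hxu, _root_.dist_self]
        linarith [hx.2.2.1]
      rw [← Finset.sum_biUnion hSdisj]
      apply sum_sq_le_of_disjoint_balls _ c r (fun x _ => (hmodel.r_pos x).le) (c u)
        ((2:ℝ)^(j+2)) (by positivity)
      · intro a ha b hb hab
        exact hmodel.disj a b hab
      · intro x hx
        rw [Finset.mem_biUnion] at hx
        obtain ⟨i, hiF, hxS⟩ := hx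
        rw [hmemS] at hxS
        have hrx : r x ≤ 1 := hr1 i x hxS.1 hxS.2.1
        intro y hy
        rw [Metric.mem_ball] at hy ⊢
        have h1 : (1:ℝ) ≤ 2^(j+1) := by
          calc (1:ℝ) = 2^0 := by norm_num
            _ ≤ 2^(j+1) := pow_le_pow_right₀ one_le_two (by omega)
        calc dist y (c u) ≤ dist y (c x) + dist (c x) (c u) := dist_triangle _ _ _
          _ < r x + 2^(j+1) := by linarith [hxS.2.2.2]
          _ ≤ 1 + 2^(j+1) := by linarith
          _ ≤ 2^(j+2) := by
            have h2 : (2:ℝ)^(j+2) = 2^(j+1) + 2^(j+1) := by ring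
            linarith
    -- CLAIM 3 : harmonic sum per scale
    have claim3 : ∀ j : ℕ, 3 ≤ j → j ≤ J + 2 →
        ∑ i ∈ F, ((S i j).card : ℝ)⁻¹ ≤ 256 := by
      intro j hj3 hjJ
      have h2pos : (0:ℝ) < 2^j := by positivity
      have hkey : ∀ i ∈ F, ((2:ℝ)^j / 4)^2 * ((S i j).card : ℝ)⁻¹ ≤ ∑ x ∈ S i j, r x ^ 2 := by
        intro i hiF
        have hc1 := claim1 i hiF j hj3 hjJ
        have hcard : 0 < (S i j).card := by
          rw [Finset.card_pos]
          by_contra h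
          rw [Finset.not_nonempty_iff_eq_empty] at h
          rw [h, Finset.sum_empty] at hc1
          linarith
        have hcardR : (0:ℝ) < ((S i j).card : ℝ) := by exact_mod_cast hcard
        have hcs : (∑ x ∈ S i j, r x)^2 ≤ ((S i j).card : ℝ) * ∑ x ∈ S i j, r x ^ 2 := by
          exact_mod_cast sq_sum_le_card_mul_sum_sq (s := S i j) (f := r)
        have h1 : ((2:ℝ)^j / 4)^2 ≤ (∑ x ∈ S i j, r x)^2 := by
          apply pow_le_pow_left₀ (by positivity) hc1
        rw [mul_inv_le_iff₀ hcardR, mul_comm]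
        linarith
      have h2 : ((2:ℝ)^j / 4)^2 * ∑ i ∈ F, ((S i j).card : ℝ)⁻¹ ≤ ((2:ℝ)^(j+2))^2 := by
        rw [Finset.mul_sum]
        calc ∑ i ∈ F, ((2:ℝ)^j / 4)^2 * ((S i j).card : ℝ)⁻¹
            ≤ ∑ i ∈ F, ∑ x ∈ S i j, r x ^ 2 := Finset.sum_le_sum hkey
          _ ≤ ((2:ℝ)^(j+2))^2 := claim2 j
      have h3 : ((2:ℝ)^(j+2))^2 = 256 * ((2:ℝ)^j / 4)^2 := by
        rw [pow_add]
        ring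
      rw [h3] at h2
      have hq : (0:ℝ) < ((2:ℝ)^j / 4)^2 := by positivity
      have h2' : ((2:ℝ)^j / 4)^2 * (∑ i ∈ F, ((S i j).card : ℝ)⁻¹) ≤
          ((2:ℝ)^j / 4)^2 * 256 := by linarith
      exact le_of_mul_le_mul_left h2' hq
    -- CLAIM 4 : AM-HM per far chain
    have claim4 : ∀ i ∈ F, ((J:ℝ))^2 / d ≤ ∑ j ∈ Finset.Icc 3 (J+2), ((S i j).card : ℝ)⁻¹ := by
      intro i hiF
      have hm1 : ∀ j ∈ Finset.Icc 3 (J+2), 0 < (S i j).card := by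
        intro j hj
        rw [Finset.mem_Icc] at hj
        have hc1 := claim1 i hiF j hj.1 hj.2
        rw [Finset.card_pos]
        by_contra h
        rw [Finset.not_nonempty_iff_eq_empty] at h
        rw [h, Finset.sum_empty] at hc1
        have : (0:ℝ) < 2^j := by positivity
        linarith
      -- sum of cards at most d
      have hsum_m : ∑ j ∈ Finset.Icc 3 (J+2), ((S i j).card : ℝ) ≤ (d:ℝ) := by
        have hdisjJ : (↑(Finset.Icc 3 (J+2)) : Set ℕ).PairwiseDisjoint (fun j => S i j) := by
          intro j _ j' _ hjj'
          rw [Function.onFun, Finset.disjoint_left]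
          intro x hx hx'
          rw [hmemS] at hx hx'
          rcases lt_or_gt_of_ne hjj' with h | h
          · have : (2:ℝ)^(j+1) ≤ 2^j' := pow_le_pow_right₀ one_le_two (by omega)
            linarith [hx.2.2.2, hx'.2.2.1]
          · have : (2:ℝ)^(j'+1) ≤ 2^j := pow_le_pow_right₀ one_le_two (by omega)
            linarith [hx.2.2.1, hx'.2.2.2]
        have hcardsum : ∑ j ∈ Finset.Icc 3 (J+2), (S i j).card ≤ d := by
          rw [← Finset.card_biUnion hdisjJ]
          have hsub : (Finset.Icc 3 (J+2)).biUnion (fun j => S i j) ⊆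
              (p i).support.toFinset.erase (w i) := by
            intro x hx
            rw [Finset.mem_biUnion] at hx
            obtain ⟨j, _, hxS⟩ := hx
            rw [hmemS] at hxS
            rw [Finset.mem_erase, List.mem_toFinset]
            exact ⟨hxS.2.1, hxS.1⟩
          calc ((Finset.Icc 3 (J+2)).biUnion (fun j => S i j)).card
              ≤ ((p i).support.toFinset.erase (w i)).card := Finset.card_le_card hsub
            _ = (p i).support.toFinset.card - 1 := by
                rw [Finset.card_erase_of_mem]
                rw [List.mem_toFinset]
                exact Walk.end_mem_support _
            _ ≤ d := by
                have h1 : (p i).support.toFinset.card = (p i).support.length := by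
                  rw [List.toFinset_card_of_nodup (hpath i).support_nodup]
                rw [h1, Walk.length_support]
                have := (hlen i).2
                omega
        calc ∑ j ∈ Finset.Icc 3 (J+2), ((S i j).card : ℝ)
            = ((∑ j ∈ Finset.Icc 3 (J+2), (S i j).card : ℕ) : ℝ) := by push_cast; rfl
          _ ≤ (d:ℝ) := by exact_mod_cast hcardsum
      have hcs := Finset.sum_sq_le_sum_mul_sum_of_sq_eq_mul (Finset.Icc 3 (J+2))
        (r := fun _ => (1:ℝ)) (f := fun j => ((S i j).card : ℝ))
        (g := fun j => ((S i j).card : ℝ)⁻¹)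
        (fun j _ => Nat.cast_nonneg _)
        (fun j _ => inv_nonneg.mpr (Nat.cast_nonneg _))
        (fun j hj => by
          have hpos := hm1 j hj
          have hne : ((S i j).card : ℝ) ≠ 0 := by
            exact_mod_cast Nat.pos_iff_ne_zero.mp hpos
          rw [one_pow, mul_inv_cancel₀ hne])
      have hcardIcc : (Finset.Icc 3 (J+2)).card = J := by
        rw [Nat.card_Icc]
        omega
      rw [Finset.sum_const, hcardIcc, nsmul_eq_mul, mul_one] at hcs
      have hdpos : (0:ℝ) < d := by linarith
      rw [div_le_iff₀ hdpos]
      calc ((J:ℝ))^2 ≤ (∑ j ∈ Finset.Icc 3 (J+2), ((S i j).card : ℝ)) *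
            ∑ j ∈ Finset.Icc 3 (J+2), ((S i j).card : ℝ)⁻¹ := hcs
        _ ≤ (d:ℝ) * ∑ j ∈ Finset.Icc 3 (J+2), ((S i j).card : ℝ)⁻¹ := by
            apply mul_le_mul_of_nonneg_right hsum_m
            apply Finset.sum_nonneg
            intro j _
            positivity
        _ = (∑ j ∈ Finset.Icc 3 (J+2), ((S i j).card : ℝ)⁻¹) * d := by ring
    -- combine
    have h5 : (F.card : ℝ) * ((J:ℝ)^2 / d) ≤ 256 * J := by
      calc (F.card : ℝ) * ((J:ℝ)^2 / d)
          = ∑ _i ∈ F, ((J:ℝ)^2 / d) := by rw [Finset.sum_const, nsmul_eq_mul]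
        _ ≤ ∑ i ∈ F, ∑ j ∈ Finset.Icc 3 (J+2), ((S i j).card : ℝ)⁻¹ :=
            Finset.sum_le_sum claim4
        _ = ∑ j ∈ Finset.Icc 3 (J+2), ∑ i ∈ F, ((S i j).card : ℝ)⁻¹ := Finset.sum_comm
        _ ≤ ∑ j ∈ Finset.Icc 3 (J+2), (256:ℝ) := by
            apply Finset.sum_le_sum
            intro j hj
            rw [Finset.mem_Icc] at hj
            exact claim3 j hj.1 hj.2
        _ = 256 * J := by
            rw [Finset.sum_const, Nat.card_Icc, nsmul_eq_mul]
            have : J + 2 + 1 - 3 = J := by omega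
            rw [this]
            ring
    have hJpos : (0:ℝ) < J := by exact_mod_cast hJ1
    have hdpos : (0:ℝ) < d := by linarith
    rw [le_div_iff₀ hJpos]
    have h6 := mul_le_mul_of_nonneg_right h5 hdpos.le
    have h7 : (F.card : ℝ) * ((J:ℝ)^2 / d) * d = (F.card : ℝ) * J * J := by
      field_simp
    rw [h7] at h6
    have h8 : (F.card : ℝ) * J * J ≤ 256 * J * d := by linarith
    exact le_of_mul_le_mul_right (by linarith) hJpos
  -- NUMERICS
  obtain ⟨L0, hL0⟩ : ∃ L0 : ℕ, L0 = Nat.log 2 d := ⟨_, rfl⟩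
  rw [← hL0] at hJdef
  obtain ⟨q, hq⟩ : ∃ q : ℕ, q = L0 / 4 := ⟨_, rfl⟩
  have hJq : J = q + 1 := by omega
  set t : ℝ := 2 ^ q with htdef
  have ht1 : (1:ℝ) ≤ t := by
    rw [htdef]
    calc (1:ℝ) = 2^0 := by norm_num
      _ ≤ 2^q := pow_le_pow_right₀ one_le_two (Nat.zero_le q)
  have hDt : D = 16 * t := by
    rw [hDdef, hJq, htdef, show q + 1 + 3 = q + 4 by omega, pow_add]
    ring
  have ht4 : t^4 ≤ (d:ℝ) := by
    rw [htdef, ← pow_mul]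
    calc (2:ℝ)^(q*4) ≤ 2^L0 := pow_le_pow_right₀ one_le_two (by omega)
      _ ≤ (d:ℝ) := by
        have h1 : 2^L0 ≤ d := by
          rw [hL0]
          exact Nat.pow_log_le_self 2 (by omega)
        exact_mod_cast h1
  have hdpos : (0:ℝ) < d := by linarith
  have hsd : (0:ℝ) < Real.sqrt d := Real.sqrt_pos.mpr hdpos
  have ht2 : t^2 ≤ Real.sqrt d := by
    rw [Real.le_sqrt (by positivity) (by positivity)]
    calc (t^2)^2 = t^4 := by ring
      _ ≤ (d:ℝ) := ht4
  have hld : Real.log d ≤ 2 * Real.sqrt d := by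
    have h1 : Real.log (Real.sqrt d) ≤ Real.sqrt d - 1 := Real.log_le_sub_one_of_pos hsd
    have h2 : Real.log (Real.sqrt d) = Real.log d / 2 := Real.log_sqrt hdpos.le
    linarith
  have hnear2 : (N.card : ℝ) ≤ 722 * d / Real.log d := by
    rw [le_div_iff₀ hlog]
    have hD3 : D + 3 ≤ 19 * t := by rw [hDt]; linarith
    have h2 : (N.card : ℝ) ≤ 361 * t^2 := by
      calc (N.card : ℝ) ≤ (D + 3)^2 := hnear
        _ ≤ (19*t)^2 := by
          apply pow_le_pow_left₀ (by linarith) hD3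
        _ = 361 * t^2 := by ring
    have h3 : t^2 * Real.log d ≤ 2 * d := by
      calc t^2 * Real.log d ≤ Real.sqrt d * (2 * Real.sqrt d) := by
            apply mul_le_mul ht2 hld (Real.log_nonneg (by linarith)) hsd.le
        _ = 2 * (Real.sqrt d * Real.sqrt d) := by ring
        _ = 2 * d := by rw [Real.mul_self_sqrt hdpos.le]
    calc (N.card : ℝ) * Real.log d ≤ 361 * t^2 * Real.log d := by
          apply mul_le_mul_of_nonneg_right h2 (Real.log_nonneg (by linarith))
      _ = 361 * (t^2 * Real.log d) := by ring
      _ ≤ 361 * (2 * d) := by linarith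
      _ = 722 * d := by ring
  have hJpos : (0:ℝ) < J := by
    have : 1 ≤ J := hJ1
    exact_mod_cast Nat.pos_of_ne_zero (by omega)
  have hfar2 : Real.log d ≤ 3 * J := by
    have h1 : (d:ℝ) < 2^(L0+1) := by
      have h2 : d < 2^(L0+1) := by
        rw [hL0]
        exact Nat.lt_pow_succ_log_self one_lt_two d
      exact_mod_cast h2
    have h2 : Real.log d < Real.log (2^(L0+1)) := Real.log_lt_log hdpos h1
    rw [Real.log_pow] at h2
    have h3 : Real.log 2 ≤ 3/4 := le_of_lt (lt_trans Real.log_two_lt_d9 (by norm_num))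
    have h4 : ((L0:ℝ)+1) ≤ 4*J := by
      have : L0 + 1 ≤ 4 * J := by omega
      exact_mod_cast this
    calc Real.log d ≤ ((L0:ℝ)+1) * Real.log 2 := by
          push_cast at h2 ⊢
          linarith
      _ ≤ ((L0:ℝ)+1) * (3/4) := by
          apply mul_le_mul_of_nonneg_left h3 (by positivity)
      _ ≤ (4*J) * (3/4) := by
          apply mul_le_mul_of_nonneg_right h4 (by norm_num)
      _ = 3 * J := by ring
  have hfar3 : (F.card : ℝ) ≤ 768 * d / Real.log d := by
    calc (F.card : ℝ) ≤ 256 * d / J := hfarb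
      _ ≤ 768 * d / Real.log d := by
        rw [div_le_div_iff₀ hJpos hlog]
        have : Real.log d * d ≤ 3 * J * d := by
          apply mul_le_mul_of_nonneg_right hfar2 hdpos.le
        nlinarith
  have hk : (k:ℝ) = (F.card : ℝ) + (N.card : ℝ) := by exact_mod_cast hsplit.symm
  rw [hk]
  have hfinal : 768 * (d:ℝ) / Real.log d + 722 * d / Real.log d ≤ 1500 * d / Real.log d := by
    rw [← add_div, div_le_div_iff₀ hlog hlog]
    nlinarith [Real.log_nonneg (le_of_lt hd1)]
  linarith


/-- Every Koebe ordering of a planar graph has `d`-admissibility at most `O(d / ln d)`: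
any family of paths of length between 1 and `d`, starting at `u`, ending at a vertex `⪯ u`,
with internal vertices strictly `≻ u`, pairwise disjoint apart from sharing `u`,
has size at most `C·d/ln d`. -/
theorem koebe_admissibility_upper_bound :
    ∃ C : ℝ, 0 < C ∧
      ∀ (d : ℕ), 2 ≤ d →
      ∀ (V : Type) [Fintype V] [LinearOrder V],
      ∀ (G : SimpleGraph V) (c : V → EuclideanSpace ℝ (Fin 2)) (r : V → ℝ),
        IsCoinModel G c r →
        (∀ a b : V, r b < r a → a ≤ b) →
        ∀ (u : V) (k : ℕ) (w : Fin k → V) (p : ∀ i, G.Walk u (w i)),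
          (∀ i, (p i).IsPath) →
          (∀ i, 1 ≤ (p i).length ∧ (p i).length ≤ d) →
          (∀ i, w i ≤ u) →
          (∀ i, ∀ x ∈ (p i).support, x ≠ u → x ≠ w i → u < x) →
          (∀ i j, i ≠ j → ∀ x, x ∈ (p i).support → x ∈ (p j).support → x = u) →
          (k : ℝ) ≤ C * d / Real.log d := by
  refine ⟨1500, by norm_num, ?_⟩
  intro d hd V _ _ G c r hmodel hkoebe u k w p hpath hlen hw hint hdis
  have hrupos : 0 < r u := hmodel.r_pos u
  set a : ℝ := (r u)⁻¹ with hadef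
  have hapos : 0 < a := by positivity
  have hmem_scaled : ∀ (z : EuclideanSpace ℝ (Fin 2)) (y : EuclideanSpace ℝ (Fin 2)) (ρ : ℝ),
      z ∈ ball (a • y) (a * ρ) → a⁻¹ • z ∈ ball y ρ := by
    intro z y ρ hz
    rw [Metric.mem_ball] at hz ⊢
    have h1 : a⁻¹ • (a • y) = y := by
      rw [smul_smul, inv_mul_cancel₀ (ne_of_gt hapos), one_smul]
    calc dist (a⁻¹ • z) y = dist (a⁻¹ • z) (a⁻¹ • (a • y)) := by rw [h1]
      _ = ‖a⁻¹‖ * dist z (a • y) := dist_smul₀ _ _ _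
      _ = a⁻¹ * dist z (a • y) := by rw [Real.norm_eq_abs, abs_of_pos (by positivity)]
      _ < a⁻¹ * (a * ρ) := by
          apply mul_lt_mul_of_pos_left hz (by positivity)
      _ = ρ := by field_simp
  have hmodel' : IsCoinModel G (fun v => a • c v) (fun v => a * r v) := by
    constructor
    · intro v
      exact mul_pos hapos (hmodel.r_pos v)
    · intro x y hxy
      rw [Set.disjoint_left]
      intro z hz1 hz2
      have h1 := hmem_scaled z (c x) (r x) hz1
      have h2 := hmem_scaled z (c y) (r y) hz2
      exact Set.disjoint_left.mp (hmodel.disj x y hxy) h1 h2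
    · intro x y hxy
      obtain ⟨q, hq1, hq2⟩ := hmodel.touch x y hxy
      refine ⟨a • q, ?_, ?_⟩ <;> rw [mem_closedBall] at *
      · calc dist (a • q) (a • c x) = ‖a‖ * dist q (c x) := dist_smul₀ _ _ _
          _ = a * dist q (c x) := by rw [Real.norm_eq_abs, abs_of_pos hapos]
          _ ≤ a * r x := mul_le_mul_of_nonneg_left hq1 hapos.le
      · calc dist (a • q) (a • c y) = ‖a‖ * dist q (c y) := dist_smul₀ _ _ _
          _ = a * dist q (c y) := by rw [Real.norm_eq_abs, abs_of_pos hapos]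
          _ ≤ a * r y := mul_le_mul_of_nonneg_left hq2 hapos.le
  have hkoebe' : ∀ x y : V, a * r y < a * r x → x ≤ y := by
    intro x y h
    exact hkoebe x y (lt_of_mul_lt_mul_left h hapos.le)
  have hru' : a * r u = 1 := inv_mul_cancel₀ (ne_of_gt hrupos)
  exact key_lemma d hd V G (fun v => a • c v) (fun v => a * r v) hmodel' hkoebe'
    u hru' k w p hpath hlen hw hint hdis
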